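/- Let R be a reaction network over a species type S and let ≈ be a species equivalence for R with multiset lifting ≈ₗ. Let σ be a state and τ a state with ¬(σ ≈ₗ τ). For a multiset ρ define Mgt(ρ) = { π | there exist σ' ≈ₗ σ and ρ' ≈ₗ ρ with ρ' ≤ σ' and σ' − ρ' + π ≈ₗ τ }. Then q[σ, {θ | θ ≈ₗ τ}] = ∑_{B̄} rr[ρ_{B̄}, Mgt(ρ_{B̄})] · ∏_H C(c_H(σ), c_H(ρ_{B̄})), where the sum ranges over all ≈ₗ-equivalence classes B̄ (with finitely many nonzero summands), ρ_{B̄} denotes an arbitrary element of B̄ (the summand being independent of this choice), and the product ranges over all ≈-equivalence classes H. -/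

import Mathlib

open Classical

noncomputable section

/-- A reaction of a stochastic mass-action network:
reagent multiset, kinetic parameter, product multiset. -/
structure Reaction (S : Type*) where
  reag : Multiset S
  rate : ℝ
  prod : Multiset S

variable {S : Type*}

/-- `classCount sd s σ` is the cumulative multiplicity in `σ` of the species in the
≈-equivalence class of `s` (every ≈-class is of this form). -/
def classCount (sd : Setoid S) (s : S) (σ : Multiset S) : ℕ :=
  (σ.filter (sd.r s)).card

/-- The multiset lifting `≈ₗ` of an equivalence relation `≈` on species:
two multisets are related iff they have the same cumulative multiplicity
of every ≈-equivalence class. -/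
def mlift (sd : Setoid S) (σ σ' : Multiset S) : Prop :=
  ∀ s : S, classCount sd s σ = classCount sd s σ'

/-- Cumulative multiplicity in `σ` of an ≈-equivalence class given as an
element of the quotient. -/
def classCountQ (sd : Setoid S) (H : Quotient sd) (σ : Multiset S) : ℕ :=
  (σ.filter (fun x => Quotient.mk sd x = H)).card

/-- The multiset lifting is itself an equivalence relation on multisets. -/
def mliftSetoid (sd : Setoid S) : Setoid (Multiset S) :=
  ⟨mlift sd, ⟨fun _ _ => rfl, fun h s => (h s).symm, fun h1 h2 s => (h1 s).trans (h2 s)⟩⟩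

/-- The set of reagent multisets of a reaction network. -/
def Reags (R : Finset (Reaction S)) : Finset (Multiset S) := R.image Reaction.reag

/-- The set of product multisets of a reaction network. -/
def Prods (R : Finset (Reaction S)) : Finset (Multiset S) := R.image Reaction.prod

/-- Sum of the kinetic parameters of all reactions with reagents `ρ` and products `π`. -/
def rrOff (R : Finset (Reaction S)) (ρ π : Multiset S) : ℝ :=
  ∑ x ∈ R.filter (fun x => x.reag = ρ ∧ x.prod = π), x.rate

/-- The reaction rate `rr(ρ,π)`: the sum of the kinetic parameters of the reactions from
`ρ` to `π` when `ρ ≠ π`, with diagonal correction `rr(ρ,ρ) = -∑_{π' ∈ Prod(R), π' ≠ ρ} rr(ρ,π')`. -/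
def rr (R : Finset (Reaction S)) (ρ π : Multiset S) : ℝ :=
  if ρ = π then -∑ π' ∈ (Prods R).erase ρ, rrOff R ρ π'
  else rrOff R ρ π

/-- Cumulative reaction rate `rr[ρ,B] = ∑_{π ∈ B ∩ (Prod(R) ∪ {ρ})} rr(ρ,π)`. -/
def rrSet (R : Finset (Reaction S)) (ρ : Multiset S) (B : Set (Multiset S)) : ℝ :=
  ∑ π ∈ (insert ρ (Prods R)).filter (· ∈ B), rr R ρ π

/-- Mass-action propensity of a reaction in state `σ`. -/
def propensity (σ : Multiset S) (x : Reaction S) : ℝ :=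
  x.rate * ∏ s ∈ x.reag.toFinset, ((σ.count s).choose (x.reag.count s) : ℝ)

/-- Sum of the propensities in `σ` of all reactions leading from state `σ` to state `θ`. -/
def qOff (R : Finset (Reaction S)) (σ θ : Multiset S) : ℝ :=
  ∑ x ∈ R.filter (fun x => x.reag ≤ σ ∧ σ - x.reag + x.prod = θ), propensity σ x

/-- The (finitely many) states reachable from `σ` in one reaction. -/
def succs (R : Finset (Reaction S)) (σ : Multiset S) : Finset (Multiset S) :=
  (R.filter (fun x => x.reag ≤ σ)).image (fun x => σ - x.reag + x.prod)

/-- CTMC transition rate `q(σ,θ)` of the Markov chain of the network, with the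
convention `q(σ,σ) = -∑_{θ ≠ σ} q(σ,θ)`. -/
def q (R : Finset (Reaction S)) (σ θ : Multiset S) : ℝ :=
  if σ = θ then -∑ θ' ∈ (succs R σ).erase σ, qOff R σ θ'
  else qOff R σ θ

/-- Aggregate transition rate `q[σ,B] = ∑_{θ ∈ B} q(σ,θ)` (finitely many nonzero terms). -/
def qSet (R : Finset (Reaction S)) (σ : Multiset S) (B : Set (Multiset S)) : ℝ :=
  ∑ θ ∈ (insert σ (succs R σ)).filter (· ∈ B), q R σ θ

/-- All kinetic parameters of the network are positive. -/
def posRates (R : Finset (Reaction S)) : Prop := ∀ x ∈ R, 0 < x.rate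

/-- Species equivalence (SE): for all related species `s ≈ s'`, every context `ρ` with
`s+ρ` or `s'+ρ` a reagent multiset of `R`, and every ≈ₗ-class containing at least one
product multiset (represented by `π₀ ∈ Prod(R)`), the cumulative reaction rates agree. -/
def isSE (sd : Setoid S) (R : Finset (Reaction S)) : Prop :=
  ∀ s s' : S, sd.r s s' → ∀ ρ : Multiset S,
    ((s ::ₘ ρ) ∈ Reags R ∨ (s' ::ₘ ρ) ∈ Reags R) →
    ∀ π₀ ∈ Prods R,
      rrSet R (s ::ₘ ρ) {π | mlift sd π₀ π} = rrSet R (s' ::ₘ ρ) {π | mlift sd π₀ π}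

/-- `f` is a representative map for the equivalence `sd`. -/
def IsRep (sd : Setoid S) (f : S → S) : Prop :=
  (∀ s : S, sd.r (f s) s) ∧ ∀ s s' : S, sd.r s s' → f s = f s'

/-- The reduced reaction network of `R` by the representative map `f`: one reaction
`(ρ̂, β, π̂)` for each pair `(ρ̂, π̂)` with `ρ̂ ∈ Reag(R)`, `f(ρ̂) = ρ̂`, `f(π̂) = π̂` and
`β = ∑ { α | (ρ̂,α,π) ∈ R, f(π) = π̂ }` positive. -/
def reduced (R : Finset (Reaction S)) (f : S → S) : Finset (Reaction S) :=
  ((((R.image (fun x => (x.reag, x.prod.map f))).filter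
      (fun p => p.1.map f = p.1)).image
    (fun p => (⟨p.1, ∑ x ∈ R.filter (fun x => x.reag = p.1 ∧ x.prod.map f = p.2), x.rate,
      p.2⟩ : Reaction S)))).filter (fun x => 0 < x.rate)

/-- SMB-reaction rate: sum of parameters with no diagonal correction. -/
def rrSMBSet (R : Finset (Reaction S)) (ρ : Multiset S) (B : Set (Multiset S)) : ℝ :=
  ∑ π ∈ (Prods R).filter (· ∈ B), rrOff R ρ π

/-- Syntactic Markovian bisimulation. -/
def isSMB (sd : Setoid S) (R : Finset (Reaction S)) : Prop :=
  ∀ s s' : S, sd.r s s' → ∀ ρ π₀ : Multiset S,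
    rrSMBSet R (s ::ₘ ρ) {π | mlift sd π₀ π} = rrSMBSet R (s' ::ₘ ρ) {π | mlift sd π₀ π}

/-- The summand associated with (a representative `ρ` of) an ≈ₗ-class `B̄`:
`rr[ρ, Mgt(ρ)] · ∏_H C(c_H(σ), c_H(ρ))`, the product ranging over all ≈-classes `H`. -/
def seSummand (sd : Setoid S) (R : Finset (Reaction S)) (σ τ ρ : Multiset S) : ℝ :=
  rrSet R ρ {π | ∃ σ' ρ' : Multiset S,
      mlift sd σ σ' ∧ mlift sd ρ ρ' ∧ ρ' ≤ σ' ∧ mlift sd (σ' - ρ' + π) τ} *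
    ∏ᶠ H : Quotient sd, ((classCountQ sd H σ).choose (classCountQ sd H ρ) : ℝ)


lemma classCountQ_mk (sd : Setoid S) (s : S) (σ : Multiset S) :
    classCountQ sd (Quotient.mk sd s) σ = classCount sd s σ := by
  unfold classCountQ classCount
  congr 1
  apply Multiset.filter_congr
  intro x _
  constructor
  · intro h; exact sd.symm (Quotient.eq.mp h)
  · intro h; exact Quotient.sound (sd.symm h)

lemma mlift_iff_Q (sd : Setoid S) (σ σ' : Multiset S) :
    mlift sd σ σ' ↔ ∀ H, classCountQ sd H σ = classCountQ sd H σ' := by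
  constructor
  · intro h H
    induction H using Quotient.inductionOn with
    | h s => rw [classCountQ_mk, classCountQ_mk]; exact h s
  · intro h s
    rw [← classCountQ_mk, ← classCountQ_mk]; exact h _

lemma classCount_add (sd : Setoid S) (s : S) (σ θ : Multiset S) :
    classCount sd s (σ + θ) = classCount sd s σ + classCount sd s θ := by
  unfold classCount; rw [Multiset.filter_add, Multiset.card_add]

lemma classCount_cons (sd : Setoid S) (s a : S) (σ : Multiset S) :
    classCount sd s (a ::ₘ σ) =
      (if sd.r s a then 1 else 0) + classCount sd s σ := by
  unfold classCount
  by_cases h : sd.r s a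
  · rw [Multiset.filter_cons_of_pos _ h]; simp [h]; omega
  · rw [Multiset.filter_cons_of_neg _ h]; simp [h]

lemma classCount_le (sd : Setoid S) (s : S) {ρ σ : Multiset S} (h : ρ ≤ σ) :
    classCount sd s ρ ≤ classCount sd s σ :=
  Multiset.card_le_card (Multiset.filter_le_filter _ h)

lemma classCount_sub (sd : Setoid S) (s : S) {ρ σ : Multiset S} (h : ρ ≤ σ) :
    classCount sd s (σ - ρ) = classCount sd s σ - classCount sd s ρ := by
  have : classCount sd s ((σ - ρ) + ρ) = classCount sd s σ := by
    rw [tsub_add_cancel_of_le h]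
  rw [classCount_add] at this
  omega

lemma mlift_refl (sd : Setoid S) (σ : Multiset S) : mlift sd σ σ := fun _ => rfl
lemma mlift_symm {sd : Setoid S} {σ σ' : Multiset S} (h : mlift sd σ σ') : mlift sd σ' σ :=
  fun s => (h s).symm
lemma mlift_trans {sd : Setoid S} {σ σ' σ'' : Multiset S} (h : mlift sd σ σ')
    (h' : mlift sd σ' σ'') : mlift sd σ σ'' := fun s => (h s).trans (h' s)

lemma mlift_eq_zero {sd : Setoid S} {σ : Multiset S} (h : mlift sd 0 σ) : σ = 0 := by
  by_contra hne
  obtain ⟨s, hs⟩ := Multiset.exists_mem_of_ne_zero hne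
  have := h s
  unfold classCount at this
  simp only [Multiset.filter_zero, Multiset.card_zero] at this
  have hmem : s ∈ Multiset.filter (sd.r s) σ := Multiset.mem_filter.mpr ⟨hs, sd.refl s⟩
  have := Multiset.card_pos_iff_exists_mem.mpr ⟨s, hmem⟩
  omega

lemma mlift_sub_add {sd : Setoid S} {σ σ' ρ ρ' : Multiset S} (π π' : Multiset S)
    (hσ : mlift sd σ σ') (hρ : mlift sd ρ ρ') (hπ : mlift sd π π')
    (h : ρ ≤ σ) (h' : ρ' ≤ σ') : mlift sd (σ - ρ + π) (σ' - ρ' + π') := by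
  intro s
  rw [classCount_add, classCount_add, classCount_sub _ _ h, classCount_sub _ _ h']
  have h1 := hσ s; have h2 := hρ s; have h3 := hπ s
  have := classCount_le sd s h
  omega

lemma mlift_cons_cons {sd : Setoid S} {s s' : S} (h : sd.r s s') (μ : Multiset S) :
    mlift sd (s ::ₘ μ) (s' ::ₘ μ) := by
  intro t
  rw [classCount_cons, classCount_cons]
  have : sd.r t s ↔ sd.r t s' := ⟨fun ht => sd.trans ht h, fun ht => sd.trans ht (sd.symm h)⟩
  simp [this]

lemma mlift_cons_elim {sd : Setoid S} {s : S} {ρ rh : Multiset S}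
    (h : mlift sd (s ::ₘ ρ) rh) : ∃ b ∈ rh, sd.r s b ∧ mlift sd ρ (rh.erase b) := by
  have hs := h s
  rw [classCount_cons] at hs
  rw [if_pos (sd.iseqv.refl s)] at hs
  have hpos : 0 < classCount sd s rh := by omega
  have : ∃ b ∈ rh, sd.r s b := by
    by_contra hc
    push_neg at hc
    have : Multiset.filter (sd.r s) rh = 0 := by
      rw [Multiset.filter_eq_nil]; exact fun a ha => hc a ha
    unfold classCount at hpos; rw [this] at hpos; simp at hpos
  obtain ⟨b, hb, hsb⟩ := this
  refine ⟨b, hb, hsb, ?_⟩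
  intro t
  have h2 := h t
  have : classCount sd t rh = classCount sd t (b ::ₘ rh.erase b) := by
    rw [Multiset.cons_erase hb]
  rw [this, classCount_cons, classCount_cons] at h2
  have heq : sd.r t s ↔ sd.r t b := ⟨fun ht => sd.trans ht hsb, fun ht => sd.trans ht (sd.symm hsb)⟩
  by_cases hts : sd.r t s
  · rw [if_pos hts, if_pos (heq.mp hts)] at h2; omega
  · rw [if_neg hts, if_neg (fun hb => hts (heq.mpr hb))] at h2; omega

def Step (sd : Setoid S) (μ ν : Multiset S) : Prop :=
  ∃ s s' μ₀, sd.r s s' ∧ μ = s ::ₘ μ₀ ∧ ν = s' ::ₘ μ₀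

lemma Step.mlift {sd : Setoid S} {μ ν : Multiset S} (h : Step sd μ ν) : mlift sd μ ν := by
  obtain ⟨s, s', μ₀, hss, rfl, rfl⟩ := h
  exact mlift_cons_cons hss μ₀

lemma Step.cons {sd : Setoid S} {μ ν : Multiset S} (t : S) (h : Step sd μ ν) :
    Step sd (t ::ₘ μ) (t ::ₘ ν) := by
  obtain ⟨s, s', μ₀, hss, rfl, rfl⟩ := h
  exact ⟨s, s', t ::ₘ μ₀, hss, Multiset.cons_swap t s μ₀, Multiset.cons_swap t s' μ₀⟩

lemma mlift_chain {sd : Setoid S} : ∀ (ρ ρ' : Multiset S), mlift sd ρ ρ' →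
    Relation.ReflTransGen (Step sd) ρ ρ' := by
  intro ρ
  induction ρ using Multiset.induction with
  | empty => intro ρ' h; rw [mlift_eq_zero h]
  | cons a ρ ih =>
    intro ρ' h
    obtain ⟨b, hb, hab, hm⟩ := mlift_cons_elim h
    have h1 : Relation.ReflTransGen (Step sd) (a ::ₘ ρ) (b ::ₘ ρ) :=
      Relation.ReflTransGen.single ⟨a, b, ρ, hab, rfl, rfl⟩
    have h2 : Relation.ReflTransGen (Step sd) (b ::ₘ ρ) (b ::ₘ ρ'.erase b) :=
      (ih _ hm).lift (Multiset.cons b) (fun _ _ hs => Step.cons b hs)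
    rw [Multiset.cons_erase hb] at h2
    exact h1.trans h2



def binomN (σ ρ : Multiset S) : ℕ :=
  ∏ s ∈ ρ.toFinset, (σ.count s).choose (ρ.count s)

lemma binomN_superset {σ ρ : Multiset S} {T : Finset S} (h : ρ.toFinset ⊆ T) :
    ∏ s ∈ T, (σ.count s).choose (ρ.count s) = binomN σ ρ := by
  unfold binomN
  refine (Finset.prod_subset h ?_).symm
  intro x _ hx
  rw [Multiset.mem_toFinset] at hx
  rw [Multiset.count_eq_zero_of_notMem hx, Nat.choose_zero_right]

lemma count_powerset : ∀ (σ ρ : Multiset S), σ.powerset.count ρ = binomN σ ρ := by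
  intro σ
  induction σ using Multiset.induction with
  | empty =>
    intro ρ
    rw [Multiset.powerset_zero]
    by_cases h : ρ = 0
    · subst h; simp [binomN]
    · obtain ⟨s, hs⟩ := Multiset.exists_mem_of_ne_zero h
      have h1 : Multiset.count ρ ({0} : Multiset (Multiset S)) = 0 := by
        rw [Multiset.count_singleton, if_neg h]
      rw [h1]
      refine (Finset.prod_eq_zero (Multiset.mem_toFinset.mpr hs) ?_).symm
      rw [Multiset.count_zero, Nat.choose_eq_zero_of_lt]
      exact Multiset.count_pos.mpr hs
  | cons a σ ih =>
    intro ρ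
    rw [Multiset.powerset_cons, Multiset.count_add, ih]
    have hmap : (Multiset.map (a ::ₘ ·) σ.powerset).count ρ =
        if a ∈ ρ then binomN σ (ρ.erase a) else 0 := by
      rw [Multiset.count_map]
      by_cases ha : a ∈ ρ
      · rw [if_pos ha, ← ih]
        rw [Multiset.count, Multiset.countP_eq_card_filter]
        congr 1
        apply Multiset.filter_congr
        intro μ _
        constructor
        · intro h; rw [h, Multiset.erase_cons_head]
        · intro h; rw [← h, Multiset.cons_erase ha]
      · rw [if_neg ha]
        have : Multiset.filter (fun μ => ρ = a ::ₘ μ) σ.powerset = 0 := by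
          rw [Multiset.filter_eq_nil]
          intro μ _ hc
          exact ha (hc ▸ Multiset.mem_cons_self a μ)
        rw [this]; rfl
    rw [hmap]
    -- now the binomial identity
    by_cases ha : a ∈ ρ
    · rw [if_pos ha]
      have hT : ρ.toFinset ⊆ ρ.toFinset := le_refl _
      have hT' : (ρ.erase a).toFinset ⊆ ρ.toFinset := by
        intro x hx
        rw [Multiset.mem_toFinset] at hx ⊢
        exact Multiset.mem_of_mem_erase hx
      have haT : a ∈ ρ.toFinset := Multiset.mem_toFinset.mpr ha
      rw [← binomN_superset hT (σ := a ::ₘ σ), ← binomN_superset hT (σ := σ),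
        ← binomN_superset hT' (σ := σ)]
      rw [← Finset.mul_prod_erase _ _ haT, ← Finset.mul_prod_erase _ _ haT,
        ← Finset.mul_prod_erase _ _ haT]
      have hrest : ∀ x ∈ ρ.toFinset.erase a,
          ((a ::ₘ σ).count x).choose (ρ.count x)
            = (σ.count x).choose (ρ.count x) ∧
          (σ.count x).choose ((ρ.erase a).count x) = (σ.count x).choose (ρ.count x) := by
        intro x hx
        have hxa : x ≠ a := Finset.ne_of_mem_erase hx
        rw [Multiset.count_cons_of_ne hxa, Multiset.count_erase_of_ne hxa]
        exact ⟨rfl, rfl⟩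
      rw [Finset.prod_congr rfl (fun x hx => (hrest x hx).1),
        Finset.prod_congr rfl (fun x hx => (hrest x hx).2)]
      rw [← add_mul]
      congr 1
      rw [Multiset.count_cons_self, Multiset.count_erase_self]
      obtain ⟨k, hk⟩ : ∃ k, ρ.count a = k + 1 :=
        ⟨ρ.count a - 1, by have := Multiset.count_pos.mpr ha; omega⟩
      rw [hk]
      simp [Nat.choose_succ_succ, Nat.add_comm]
    · rw [if_neg ha, add_zero]
      unfold binomN
      apply Finset.prod_congr rfl
      intro x hx
      have hxa : x ≠ a := by
        rintro rfl; exact ha (Multiset.mem_toFinset.mp hx)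
      rw [Multiset.count_cons_of_ne hxa]



lemma mlift_zero_iff {sd : Setoid S} {rh : Multiset S} : mlift sd 0 rh ↔ rh = 0 :=
  ⟨mlift_eq_zero, by rintro rfl; exact fun _ => rfl⟩

lemma mlift_cons_cancel {sd : Setoid S} {a b : S} (hab : sd.r a b) {μ ν : Multiset S} :
    mlift sd (a ::ₘ μ) (b ::ₘ ν) ↔ mlift sd μ ν := by
  constructor
  · intro h t
    have := h t
    rw [classCount_cons, classCount_cons] at this
    have hiff : sd.r t a ↔ sd.r t b :=
      ⟨fun ht => sd.trans ht hab, fun ht => sd.trans ht (sd.symm hab)⟩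
    by_cases hta : sd.r t a
    · rw [if_pos hta, if_pos (hiff.mp hta)] at this; omega
    · rw [if_neg hta, if_neg (fun hb => hta (hiff.mpr hb))] at this; omega
  · intro h t
    rw [classCount_cons, classCount_cons]
    have hiff : sd.r t a ↔ sd.r t b :=
      ⟨fun ht => sd.trans ht hab, fun ht => sd.trans ht (sd.symm hab)⟩
    by_cases hta : sd.r t a
    · rw [if_pos hta, if_pos (hiff.mp hta), h t]
    · rw [if_neg hta, if_neg (fun hb => hta (hiff.mpr hb)), h t]

lemma classCountQ_zero (sd : Setoid S) (H : Quotient sd) : classCountQ sd H 0 = 0 := rfl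

lemma classCountQ_cons (sd : Setoid S) (H : Quotient sd) (a : S) (σ : Multiset S) :
    classCountQ sd H (a ::ₘ σ) =
      (if Quotient.mk sd a = H then 1 else 0) + classCountQ sd H σ := by
  unfold classCountQ
  rw [Multiset.filter_cons]
  by_cases h : Quotient.mk sd a = H
  · simp [h]; omega
  · simp [h]

lemma classCountQ_pos {sd : Setoid S} {H : Quotient sd} {σ : Multiset S}
    (h : 0 < classCountQ sd H σ) : ∃ x ∈ σ, Quotient.mk sd x = H := by
  unfold classCountQ at h
  obtain ⟨x, hx⟩ := Multiset.card_pos_iff_exists_mem.mp h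
  rw [Multiset.mem_filter] at hx
  exact ⟨x, hx.1, hx.2⟩

lemma card_powerset_filter (sd : Setoid S) :
    ∀ (σ rh : Multiset S) (T : Finset (Quotient sd)),
    (∀ x ∈ σ, Quotient.mk sd x ∈ T) → (∀ x ∈ rh, Quotient.mk sd x ∈ T) →
    (σ.powerset.filter (fun ρ => mlift sd ρ rh)).card =
      ∏ H ∈ T, (classCountQ sd H σ).choose (classCountQ sd H rh) := by
  intro σ
  induction σ using Multiset.induction with
  | empty =>
    intro rh T hσ hrh
    rw [Multiset.powerset_zero]
    by_cases h : rh = 0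
    · subst h
      have : Multiset.filter (fun ρ => mlift sd ρ 0) {0} = {0} := by
        rw [Multiset.filter_eq_self]
        intro ρ hρ
        rw [Multiset.mem_singleton] at hρ; subst hρ; exact fun _ => rfl
      rw [this]
      simp [classCountQ_zero]
    · have h0 : Multiset.filter (fun ρ => mlift sd ρ 0) {0} = {0} := by
        rw [Multiset.filter_eq_self]; intro ρ hρ
        rw [Multiset.mem_singleton] at hρ; subst hρ; exact fun _ => rfl
      have : Multiset.filter (fun ρ => mlift sd ρ rh) {0} = 0 := by
        rw [Multiset.filter_eq_nil]
        intro ρ hρ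
        rw [Multiset.mem_singleton] at hρ; subst hρ
        intro hc; exact h (mlift_eq_zero hc)
      rw [this]
      obtain ⟨x, hx⟩ := Multiset.exists_mem_of_ne_zero h
      have hxT := hrh x hx
      have hpos : 0 < classCountQ sd (Quotient.mk sd x) rh := by
        unfold classCountQ
        exact Multiset.card_pos_iff_exists_mem.mpr ⟨x, Multiset.mem_filter.mpr ⟨hx, rfl⟩⟩
      symm
      apply Finset.prod_eq_zero hxT
      rw [classCountQ_zero, Nat.choose_eq_zero_of_lt hpos]
  | cons a σ ih =>
    intro rh T hσ hrh
    have hσ' : ∀ x ∈ σ, Quotient.mk sd x ∈ T := fun x hx => hσ x (Multiset.mem_cons_of_mem hx)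
    have haT : Quotient.mk sd a ∈ T := hσ a (Multiset.mem_cons_self a σ)
    rw [Multiset.powerset_cons, Multiset.filter_add, Multiset.card_add,
      Multiset.filter_map, Multiset.card_map]
    by_cases hab : ∃ b ∈ rh, sd.r a b
    · obtain ⟨b, hb, hab'⟩ := hab
      have hcong : Multiset.filter ((fun ρ => mlift sd ρ rh) ∘ (a ::ₘ ·)) σ.powerset =
          Multiset.filter (fun μ => mlift sd μ (rh.erase b)) σ.powerset := by
        apply Multiset.filter_congr
        intro μ _
        show mlift sd (a ::ₘ μ) rh ↔ _
        have h2 := mlift_cons_cancel hab' (μ := μ) (ν := rh.erase b)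
        rw [Multiset.cons_erase hb] at h2
        exact h2
      rw [hcong, ih rh T hσ' hrh,
        ih (rh.erase b) T hσ' (fun x hx => hrh x (Multiset.mem_of_mem_erase hx))]
      -- factor manipulation
      have hbq : Quotient.mk sd b = Quotient.mk sd a := Quotient.sound (sd.symm hab')
      set H₀ := Quotient.mk sd a with hH₀
      rw [← Finset.mul_prod_erase _ _ haT, ← Finset.mul_prod_erase _ _ haT,
        ← Finset.mul_prod_erase _ _ haT]
      have herase : ∀ H, classCountQ sd H rh =
          (if Quotient.mk sd b = H then 1 else 0) + classCountQ sd H (rh.erase b) := by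
        intro H
        conv_lhs => rw [← Multiset.cons_erase hb]
        rw [classCountQ_cons]
      have hrest : ∀ H ∈ T.erase H₀,
          (classCountQ sd H σ).choose (classCountQ sd H (rh.erase b)) =
            (classCountQ sd H σ).choose (classCountQ sd H rh) ∧
          (classCountQ sd H (a ::ₘ σ)).choose (classCountQ sd H rh) =
            (classCountQ sd H σ).choose (classCountQ sd H rh) := by
        intro H hH
        have hne : H₀ ≠ H := (Finset.ne_of_mem_erase hH).symm
        constructor
        · rw [herase H, if_neg (hbq ▸ hne), zero_add]
        · rw [classCountQ_cons, if_neg hne, zero_add]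
      rw [Finset.prod_congr rfl (fun H hH => (hrest H hH).1),
        Finset.prod_congr rfl (fun H hH => (hrest H hH).2)]
      rw [← add_mul]
      congr 1
      rw [classCountQ_cons, if_pos rfl]
      have hk := herase H₀
      rw [if_pos hbq] at hk
      rw [hk]
      generalize classCountQ sd H₀ σ = n
      generalize classCountQ sd H₀ (rh.erase b) = k
      rw [Nat.add_comm 1 k, Nat.add_comm 1 n, Nat.choose_succ_succ']
      omega
    · push_neg at hab
      have hemp : Multiset.filter ((fun ρ => mlift sd ρ rh) ∘ (a ::ₘ ·)) σ.powerset = 0 := by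
        rw [Multiset.filter_eq_nil]
        intro μ _ hc
        obtain ⟨b, hb, hab', _⟩ := mlift_cons_elim hc
        exact hab b hb hab'
      rw [hemp, Multiset.card_zero, add_zero, ih rh T hσ' hrh]
      apply Finset.prod_congr rfl
      intro H hH
      by_cases hH₀ : Quotient.mk sd a = H
      · have hk : classCountQ sd H rh = 0 := by
          by_contra hc
          obtain ⟨x, hx, hxH⟩ := classCountQ_pos (Nat.pos_of_ne_zero hc)
          refine hab x hx ?_
          exact Quotient.eq.mp (hH₀ ▸ hxH.symm ▸ rfl : Quotient.mk sd a = Quotient.mk sd x)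
        rw [hk, Nat.choose_zero_right, Nat.choose_zero_right]
      · rw [classCountQ_cons, if_neg hH₀, zero_add]


-- abbreviation for the quotient map of the lifted setoid
section RR
variable (sd : Setoid S)

def mkm (σ : Multiset S) : Quotient (mliftSetoid sd) := Quotient.mk (mliftSetoid sd) σ

lemma mkm_eq_iff {σ σ' : Multiset S} : mkm sd σ = mkm sd σ' ↔ mlift sd σ σ' :=
  ⟨fun h => Quotient.exact h, fun h => Quotient.sound h⟩

variable {sd}

lemma reag_mem {R : Finset (Reaction S)} {x : Reaction S} (hx : x ∈ R) :
    x.reag ∈ Reags R := Finset.mem_image_of_mem _ hx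

lemma rrOff_eq_zero {R : Finset (Reaction S)} {ρ : Multiset S} (h : ρ ∉ Reags R)
    (π : Multiset S) : rrOff R ρ π = 0 := by
  unfold rrOff
  rw [Finset.sum_eq_zero]
  intro x hx
  rw [Finset.mem_filter] at hx
  exact absurd (hx.2.1 ▸ reag_mem hx.1) h

lemma rrSet_eq_sum_prods {R : Finset (Reaction S)} {ρ : Multiset S} {M : Set (Multiset S)}
    (h : ρ ∉ M) : rrSet R ρ M = ∑ π ∈ (Prods R).filter (· ∈ M), rrOff R ρ π := by
  unfold rrSet
  rw [Finset.filter_insert, if_neg h]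
  apply Finset.sum_congr rfl
  intro π hπ
  rw [Finset.mem_filter] at hπ
  have : ρ ≠ π := fun hc => h (hc ▸ hπ.2)
  rw [rr, if_neg this]

lemma rrSet_eq_zero {R : Finset (Reaction S)} {ρ : Multiset S} {M : Set (Multiset S)}
    (hreag : ρ ∉ Reags R) (h : ρ ∉ M) : rrSet R ρ M = 0 := by
  rw [rrSet_eq_sum_prods h]
  exact Finset.sum_eq_zero fun π _ => rrOff_eq_zero hreag π

lemma sum_rate_eq_rrSet {R : Finset (Reaction S)} {ρ : Multiset S} {M : Set (Multiset S)}
    (h : ρ ∉ M) :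
    ∑ x ∈ R.filter (fun x => x.reag = ρ ∧ x.prod ∈ M), x.rate = rrSet R ρ M := by
  rw [rrSet_eq_sum_prods h]
  rw [← Finset.sum_fiberwise_of_maps_to
    (g := fun x : Reaction S => x.prod) (t := (Prods R).filter (· ∈ M))
    (fun x hx => by
      rw [Finset.mem_filter] at hx ⊢
      exact ⟨Finset.mem_image_of_mem _ hx.1, hx.2.2⟩)]
  apply Finset.sum_congr rfl
  intro π hπ
  rw [Finset.mem_filter] at hπ
  unfold rrOff
  apply Finset.sum_congr _ (fun _ _ => rfl)
  ext x
  simp only [Finset.mem_filter]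
  constructor
  · rintro ⟨⟨hx, hr, hp⟩, hπx⟩; exact ⟨hx, hr, hπx⟩
  · rintro ⟨hx, hr, hp⟩; exact ⟨⟨hx, hr, hp ▸ hπ.2⟩, hp⟩

/-- `M` is closed under the multiset lifting. -/
def MClosed (sd : Setoid S) (M : Set (Multiset S)) : Prop :=
  ∀ π π', π ∈ M → mlift sd π π' → π' ∈ M

lemma rrSet_step {R : Finset (Reaction S)} (hse : isSE sd R) {M : Set (Multiset S)}
    (hM : MClosed sd M) {ρ ρ' : Multiset S} (hstep : Step sd ρ ρ') (hρ : ρ ∉ M) :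
    rrSet R ρ M = rrSet R ρ' M := by
  obtain ⟨s, s', μ, hss, rfl, rfl⟩ := hstep
  have hml : mlift sd (s ::ₘ μ) (s' ::ₘ μ) := mlift_cons_cons hss μ
  have hρ' : (s' ::ₘ μ) ∉ M := fun hc => hρ (hM _ _ hc (mlift_symm hml))
  by_cases hreag : (s ::ₘ μ) ∈ Reags R ∨ (s' ::ₘ μ) ∈ Reags R
  · rw [rrSet_eq_sum_prods hρ, rrSet_eq_sum_prods hρ']
    set P := (Prods R).filter (· ∈ M) with hP
    have hfib : ∀ ρ₀ : Multiset S, ρ₀ ∉ M →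
        ∀ B ∈ P.image (mkm sd), ∀ π₀ ∈ P, mkm sd π₀ = B →
        ∑ π ∈ P.filter (fun π => mkm sd π = B), rrOff R ρ₀ π
          = rrSet R ρ₀ {π | mlift sd π₀ π} := by
      intro ρ₀ hρ₀ B hB π₀ hπ₀ hπ₀B
      rw [Finset.mem_filter] at hπ₀
      have hρ₀c : ρ₀ ∉ {π | mlift sd π₀ π} := by
        intro hc
        exact hρ₀ (hM _ _ hπ₀.2 hc)
      rw [rrSet_eq_sum_prods hρ₀c]
      apply Finset.sum_congr _ (fun _ _ => rfl)
      ext π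
      simp only [Finset.mem_filter, hP, Set.mem_setOf_eq]
      constructor
      · rintro ⟨⟨hπp, hπM⟩, hπB⟩
        exact ⟨hπp, mkm_eq_iff sd |>.mp (hπ₀B.trans hπB.symm)⟩
      · rintro ⟨hπp, hml₀⟩
        exact ⟨⟨hπp, hM _ _ hπ₀.2 hml₀⟩, ((mkm_eq_iff sd).mpr hml₀).symm.trans hπ₀B⟩
    have hmaps : ∀ π ∈ P, mkm sd π ∈ P.image (mkm sd) := fun π hπ =>
      Finset.mem_image_of_mem _ hπ
    rw [← Finset.sum_fiberwise_of_maps_to hmaps (fun π => rrOff R (s ::ₘ μ) π),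
      ← Finset.sum_fiberwise_of_maps_to hmaps (fun π => rrOff R (s' ::ₘ μ) π)]
    apply Finset.sum_congr rfl
    intro B hB
    obtain ⟨π₀, hπ₀, hπ₀B⟩ := Finset.mem_image.mp hB
    rw [hfib _ hρ B hB π₀ hπ₀ hπ₀B, hfib _ hρ' B hB π₀ hπ₀ hπ₀B]
    exact hse s s' hss μ hreag π₀ (Finset.mem_filter.mp hπ₀).1
  · push_neg at hreag
    rw [rrSet_eq_zero hreag.1 hρ, rrSet_eq_zero hreag.2 hρ']

lemma rtg_mlift {μ ν : Multiset S} (h : Relation.ReflTransGen (Step sd) μ ν) :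
    mlift sd μ ν := by
  induction h with
  | refl => exact mlift_refl sd μ
  | tail _ hstep ih => exact mlift_trans ih hstep.mlift

lemma rrSet_const {R : Finset (Reaction S)} (hse : isSE sd R) {M : Set (Multiset S)}
    (hM : MClosed sd M) {ρ ρ' : Multiset S} (hml : mlift sd ρ ρ') (hρ : ρ ∉ M) :
    rrSet R ρ M = rrSet R ρ' M := by
  have hchain := mlift_chain ρ ρ' hml
  induction hchain with
  | refl => rfl
  | @tail b c hrtg hstep ih =>
    have hmb : mlift sd ρ b := rtg_mlift hrtg
    have hbM : b ∉ M := fun hc => hρ (hM _ _ hc (mlift_symm hmb))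
    rw [ih hmb, rrSet_step hse hM hstep hbM]
end RR

section MGT
variable {sd : Setoid S}

def Mgt (sd : Setoid S) (σ τ ρ : Multiset S) : Set (Multiset S) :=
  {π | ∃ σ' ρ' : Multiset S,
      mlift sd σ σ' ∧ mlift sd ρ ρ' ∧ ρ' ≤ σ' ∧ mlift sd (σ' - ρ' + π) τ}

lemma seSummand_eq (R : Finset (Reaction S)) (σ τ ρ : Multiset S) :
    seSummand sd R σ τ ρ = rrSet R ρ (Mgt sd σ τ ρ) *
      ∏ᶠ H : Quotient sd, ((classCountQ sd H σ).choose (classCountQ sd H ρ) : ℝ) := rfl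

lemma Mgt_congr {ρ ρ₂ : Multiset S} (σ τ : Multiset S) (h : mlift sd ρ ρ₂) :
    Mgt sd σ τ ρ = Mgt sd σ τ ρ₂ := by
  ext π
  constructor
  · rintro ⟨σ', ρ', h1, h2, h3, h4⟩
    exact ⟨σ', ρ', h1, mlift_trans (mlift_symm h) h2, h3, h4⟩
  · rintro ⟨σ', ρ', h1, h2, h3, h4⟩
    exact ⟨σ', ρ', h1, mlift_trans h h2, h3, h4⟩

lemma Mgt_closed (σ τ ρ : Multiset S) : MClosed sd (Mgt sd σ τ ρ) := by
  rintro π π₂ ⟨σ', ρ', h1, h2, h3, h4⟩ hml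
  refine ⟨σ', ρ', h1, h2, h3, ?_⟩
  have : mlift sd (σ' - ρ' + π₂) (σ' - ρ' + π) :=
    mlift_sub_add π₂ π (mlift_refl sd σ') (mlift_refl sd ρ') (mlift_symm hml) h3 h3
  exact mlift_trans this h4

lemma Mgt_not_mem {σ τ ρ ρ₂ : Multiset S} (hστ : ¬ mlift sd σ τ) (h : mlift sd ρ ρ₂) :
    ρ₂ ∉ Mgt sd σ τ ρ := by
  rintro ⟨σ', ρ', h1, h2, h3, h4⟩
  apply hστ
  refine mlift_trans (fun s => ?_) h4
  rw [classCount_add, classCount_sub _ _ h3]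
  have e1 := h1 s; have e2 := h2 s; have e3 := h s
  have e4 := classCount_le sd s h3
  omega

lemma Mgt_char {σ τ ρ ρ₂ : Multiset S} (hle : ρ₂ ≤ σ) (h : mlift sd ρ ρ₂)
    (π : Multiset S) : π ∈ Mgt sd σ τ ρ ↔ mlift sd (σ - ρ₂ + π) τ := by
  constructor
  · rintro ⟨σ', ρ', h1, h2, h3, h4⟩
    refine mlift_trans ?_ h4
    exact mlift_sub_add π π h1 (mlift_trans (mlift_symm h) h2) (mlift_refl sd π) hle h3
  · intro hm
    exact ⟨σ, ρ₂, mlift_refl sd σ, h, hle, hm⟩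

lemma sum_count_filter {X : Type*} [DecidableEq X] (m : Multiset X) (p : X → Prop)
    [DecidablePred p] :
    ∑ x ∈ m.toFinset.filter p, m.count x = (m.filter p).card := by
  rw [← Multiset.toFinset_sum_count_eq (m.filter p), Multiset.toFinset_filter]
  apply Finset.sum_congr rfl
  intro x hx
  rw [Finset.mem_filter] at hx
  rw [Multiset.count_filter_of_pos hx.2]

lemma sum_binomR (sd : Setoid S) (σ rh : Multiset S) :
    ∑ ρ ∈ (σ.powerset.toFinset).filter (fun ρ => mlift sd ρ rh),
        ∏ s ∈ ρ.toFinset, ((σ.count s).choose (ρ.count s) : ℝ)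
      = ∏ᶠ H : Quotient sd, ((classCountQ sd H σ).choose (classCountQ sd H rh) : ℝ) := by
  classical
  set T : Finset (Quotient sd) := (σ.toFinset ∪ rh.toFinset).image (Quotient.mk sd) with hT
  have hσT : ∀ x ∈ σ, Quotient.mk sd x ∈ T :=
    fun x hx => Finset.mem_image_of_mem _
      (Finset.mem_union_left _ (Multiset.mem_toFinset.mpr hx))
  have hrhT : ∀ x ∈ rh, Quotient.mk sd x ∈ T :=
    fun x hx => Finset.mem_image_of_mem _
      (Finset.mem_union_right _ (Multiset.mem_toFinset.mpr hx))
  have hfin : ∏ᶠ H : Quotient sd, ((classCountQ sd H σ).choose (classCountQ sd H rh) : ℝ)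
      = ∏ H ∈ T, ((classCountQ sd H σ).choose (classCountQ sd H rh) : ℝ) := by
    apply finprod_eq_prod_of_mulSupport_subset
    intro H hH
    have hne : classCountQ sd H rh ≠ 0 := by
      intro hc
      apply hH
      simp [hc]
    obtain ⟨x, hx, hxH⟩ := classCountQ_pos (Nat.pos_of_ne_zero hne)
    exact hxH ▸ hrhT x hx
  rw [hfin]
  have hcard := card_powerset_filter sd σ rh T hσT hrhT
  have : ∑ ρ ∈ (σ.powerset.toFinset).filter (fun ρ => mlift sd ρ rh),
        ∏ s ∈ ρ.toFinset, ((σ.count s).choose (ρ.count s) : ℝ)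
      = ((∑ ρ ∈ (σ.powerset.toFinset).filter (fun ρ => mlift sd ρ rh), binomN σ ρ : ℕ) : ℝ) := by
    rw [Nat.cast_sum]
    apply Finset.sum_congr rfl
    intro ρ _
    rw [binomN, Nat.cast_prod]
  rw [this]
  have hsum : ∑ ρ ∈ (σ.powerset.toFinset).filter (fun ρ => mlift sd ρ rh), binomN σ ρ
      = (σ.powerset.filter (fun ρ => mlift sd ρ rh)).card := by
    rw [← sum_count_filter σ.powerset (fun ρ => mlift sd ρ rh)]
    exact Finset.sum_congr rfl fun ρ _ => (count_powerset σ ρ).symm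
  rw [hsum, hcard, Nat.cast_prod]

lemma seSummand_congr {R : Finset (Reaction S)} (hse : isSE sd R) {σ τ : Multiset S}
    (hστ : ¬ mlift sd σ τ) {ρ ρ' : Multiset S} (hml : mlift sd ρ ρ') :
    seSummand sd R σ τ ρ = seSummand sd R σ τ ρ' := by
  rw [seSummand_eq, seSummand_eq]
  have h1 : rrSet R ρ (Mgt sd σ τ ρ) = rrSet R ρ' (Mgt sd σ τ ρ) :=
    rrSet_const hse (Mgt_closed σ τ ρ) hml (Mgt_not_mem hστ (mlift_refl sd ρ))
  rw [h1, Mgt_congr σ τ hml]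
  congr 1
  exact finprod_congr fun H => by rw [(mlift_iff_Q sd ρ ρ').mp hml H]

lemma seSummand_reag {R : Finset (Reaction S)} {σ τ ρ : Multiset S}
    (hστ : ¬ mlift sd σ τ) (h : seSummand sd R σ τ ρ ≠ 0) : ρ ∈ Reags R := by
  by_contra hc
  apply h
  rw [seSummand_eq, rrSet_eq_zero hc (Mgt_not_mem hστ (mlift_refl sd ρ)), zero_mul]

end MGT
/-- for a species equivalence `sd` and states `σ ≉ₗ τ`, the aggregate rate
from `σ` into the class of `τ` equals the sum over all ≈ₗ-classes `B̄` of
`rr[ρ_B̄, Mgt(ρ_B̄)] · ∏_H C(c_H(σ), c_H(ρ_B̄))`; the summand does not depend on the choice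
of representative, and only finitely many summands are nonzero. -/
theorem qSet_eq_finsum_over_classes (sd : Setoid S) (R : Finset (Reaction S))
    (hpos : posRates R) (hse : isSE sd R) (σ τ : Multiset S) (hστ : ¬ mlift sd σ τ) :
    (∀ ρ ρ' : Multiset S, mlift sd ρ ρ' →
        seSummand sd R σ τ ρ = seSummand sd R σ τ ρ') ∧
    (Function.support (fun B : Quotient (mliftSetoid sd) =>
        seSummand sd R σ τ (Quotient.out B))).Finite ∧
    qSet R σ {θ | mlift sd θ τ} =
      ∑ᶠ B : Quotient (mliftSetoid sd), seSummand sd R σ τ (Quotient.out B) := by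
  classical
  set T : Finset (Quotient (mliftSetoid sd)) := (Reags R).image (mkm sd) with hTdef
  have hsupp : Function.support (fun B : Quotient (mliftSetoid sd) =>
      seSummand sd R σ τ (Quotient.out B)) ⊆ ↑T := by
    intro B hB
    have hreag : Quotient.out B ∈ Reags R := seSummand_reag hστ hB
    have : mkm sd (Quotient.out B) = B := Quotient.out_eq B
    exact this ▸ Finset.mem_image_of_mem _ hreag
  refine ⟨fun ρ ρ' hml => seSummand_congr hse hστ hml,
    Set.Finite.subset T.finite_toSet hsupp, ?_⟩
  rw [finsum_eq_sum_of_support_subset _ hsupp]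
  -- Step 1 : qSet as a sum over reactions
  set A : Finset (Reaction S) :=
    R.filter (fun x => x.reag ≤ σ ∧ mlift sd (σ - x.reag + x.prod) τ) with hAdef
  have step1 : qSet R σ {θ | mlift sd θ τ} = ∑ x ∈ A, propensity σ x := by
    unfold qSet
    rw [Finset.filter_insert, if_neg (by exact hστ)]
    have hq : ∀ θ ∈ (succs R σ).filter (· ∈ {θ | mlift sd θ τ}),
        q R σ θ = qOff R σ θ := by
      intro θ hθ
      rw [Finset.mem_filter] at hθ
      have : σ ≠ θ := by rintro rfl; exact hστ hθ.2
      rw [q, if_neg this]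
    rw [Finset.sum_congr rfl hq]
    have hmaps : ∀ x ∈ A, σ - x.reag + x.prod ∈
        (succs R σ).filter (· ∈ {θ | mlift sd θ τ}) := by
      intro x hx
      rw [hAdef, Finset.mem_filter] at hx
      rw [Finset.mem_filter]
      exact ⟨Finset.mem_image_of_mem _ (Finset.mem_filter.mpr ⟨hx.1, hx.2.1⟩), hx.2.2⟩
    rw [← Finset.sum_fiberwise_of_maps_to hmaps (propensity σ)]
    apply Finset.sum_congr rfl
    intro θ hθ
    rw [Finset.mem_filter] at hθ
    unfold qOff
    apply Finset.sum_congr _ (fun _ _ => rfl)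
    ext x
    rw [Finset.mem_filter, Finset.mem_filter, hAdef, Finset.mem_filter]
    constructor
    · rintro ⟨hx, h1, h2⟩; exact ⟨⟨hx, h1, h2 ▸ hθ.2⟩, h2⟩
    · rintro ⟨⟨hx, h1, _⟩, h2⟩; exact ⟨hx, h1, h2⟩
  rw [step1]
  -- Step 2 : group the reactions by the class of their reagents
  have hmaps2 : ∀ x ∈ A, mkm sd x.reag ∈ T := by
    intro x hx
    rw [hAdef, Finset.mem_filter] at hx
    exact Finset.mem_image_of_mem _ (reag_mem hx.1)
  rw [← Finset.sum_fiberwise_of_maps_to hmaps2 (propensity σ)]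
  -- Step 3 : per-class evaluation
  apply Finset.sum_congr rfl
  intro B _
  set rB : Multiset S := Quotient.out B with hrB
  have hmkrB : mkm sd rB = B := Quotient.out_eq B
  set Sub : Finset (Multiset S) :=
    (σ.powerset.toFinset).filter (fun ρ => mlift sd ρ rB) with hSub
  have hmaps3 : ∀ x ∈ A.filter (fun x => mkm sd x.reag = B), x.reag ∈ Sub := by
    intro x hx
    rw [Finset.mem_filter, hAdef, Finset.mem_filter] at hx
    rw [hSub, Finset.mem_filter]
    refine ⟨Multiset.mem_toFinset.mpr (Multiset.mem_powerset.mpr hx.1.2.1), ?_⟩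
    exact (mkm_eq_iff sd).mp (hx.2.trans hmkrB.symm)
  rw [← Finset.sum_fiberwise_of_maps_to hmaps3 (propensity σ)]
  have hBout : rB ∉ Mgt sd σ τ rB := Mgt_not_mem hστ (mlift_refl sd rB)
  have inner : ∀ ρ ∈ Sub,
      ∑ x ∈ (A.filter (fun x => mkm sd x.reag = B)).filter (fun x => x.reag = ρ),
          propensity σ x
        = rrSet R rB (Mgt sd σ τ rB) *
            ∏ s ∈ ρ.toFinset, ((σ.count s).choose (ρ.count s) : ℝ) := by
    intro ρ hρ
    rw [hSub, Finset.mem_filter] at hρ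
    have hρle : ρ ≤ σ := Multiset.mem_powerset.mp (Multiset.mem_toFinset.mp hρ.1)
    have hρB : mlift sd ρ rB := hρ.2
    have hρnot : ρ ∉ Mgt sd σ τ rB := Mgt_not_mem hστ (mlift_symm hρB)
    have hfeq : (A.filter (fun x => mkm sd x.reag = B)).filter (fun x => x.reag = ρ)
        = R.filter (fun x => x.reag = ρ ∧ x.prod ∈ Mgt sd σ τ rB) := by
      ext x
      rw [Finset.mem_filter, Finset.mem_filter, hAdef, Finset.mem_filter,
        Finset.mem_filter]
      constructor
      · rintro ⟨⟨⟨hx, hle, hml⟩, hmk⟩, hr⟩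
        refine ⟨hx, hr, ?_⟩
        rw [Mgt_char hρle (mlift_symm hρB)]
        rw [hr] at hml
        exact hml
      · rintro ⟨hx, hr, hp⟩
        rw [Mgt_char hρle (mlift_symm hρB)] at hp
        refine ⟨⟨⟨hx, hr ▸ hρle, hr ▸ hp⟩, ?_⟩, hr⟩
        rw [hr]
        exact ((mkm_eq_iff sd).mpr hρB).trans hmkrB
    rw [hfeq]
    have hprop : ∀ x ∈ R.filter (fun x => x.reag = ρ ∧ x.prod ∈ Mgt sd σ τ rB),
        propensity σ x = x.rate * ∏ s ∈ ρ.toFinset, ((σ.count s).choose (ρ.count s) : ℝ) := by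
      intro x hx
      rw [Finset.mem_filter] at hx
      rw [propensity, hx.2.1]
    rw [Finset.sum_congr rfl hprop, ← Finset.sum_mul,
      sum_rate_eq_rrSet hρnot,
      rrSet_const hse (Mgt_closed σ τ rB) hρB hρnot]
  rw [Finset.sum_congr rfl inner, ← Finset.mul_sum, hSub, sum_binomR sd σ rB,
    seSummand_eq]

end
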